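/- Let P ⊆ ℝⁿ₊ be a down-closed convex set containing 0, f monotone non-decreasing and DR-submodular and differentiable on a box containing P ∨ P (coordinate-wise max of pairs from P), and x, x* ∈ P. Let v ∈ P satisfy ⟨v, ∇f(x)⟩ ≥ α·max_{w ∈ P} ⟨w, ∇f(x)⟩ − δL/2 for some α ∈ (0,1], δ ≥ 0, L > 0. Then ⟨v, ∇f(x)⟩ ≥ α·(f(x*) − f(x)) − δL/2. -/

import Mathlib

/-- The diminishing returns (DR) property of `f` on `X`. -/
def DROn {n : ℕ} (f : (Fin n → ℝ) → ℝ) (X : Set (Fin n → ℝ)) : Prop :=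
  ∀ a ∈ X, ∀ b ∈ X, a ≤ b → ∀ i : Fin n, ∀ k : ℝ, 0 ≤ k →
    a + k • (Pi.single i 1 : Fin n → ℝ) ∈ X → b + k • (Pi.single i 1 : Fin n → ℝ) ∈ X →
    f (a + k • (Pi.single i 1 : Fin n → ℝ)) - f a ≥
      f (b + k • (Pi.single i 1 : Fin n → ℝ)) - f b

open Filter Set Topology

lemma line_hasDerivAt {n : ℕ} (f : (Fin n → ℝ) → ℝ) (hf : Differentiable ℝ f)
    (c u : Fin n → ℝ) (t : ℝ) :
    HasDerivAt (fun k : ℝ => f (c + k • u)) (fderiv ℝ f (c + t • u) u) t := by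
  have hline : HasDerivAt (fun k : ℝ => c + k • u) u t := by
    simpa using ((hasDerivAt_id t).smul_const u).const_add c
  exact ((hf (c + t • u)).hasFDerivAt.comp_hasDerivAt t hline)

lemma single_nonneg {n : ℕ} (i : Fin n) : (0 : Fin n → ℝ) ≤ Pi.single i 1 := by
  intro j
  by_cases h : j = i <;> simp [Pi.single_apply, h]

lemma partial_mono {n : ℕ} (f : (Fin n → ℝ) → ℝ) (hf : Differentiable ℝ f)
    (hDR : DROn f {z : Fin n → ℝ | 0 ≤ z})
    (a b : Fin n → ℝ) (ha : 0 ≤ a) (hab : a ≤ b) (i : Fin n) :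
    fderiv ℝ f b (Pi.single i 1) ≤ fderiv ℝ f a (Pi.single i 1) := by
  have hb : 0 ≤ b := ha.trans hab
  set e : Fin n → ℝ := Pi.single i 1 with he
  have he0 : (0:Fin n → ℝ) ≤ e := single_nonneg i
  set φ : ℝ → ℝ := fun k => f (a + k • e) - f (b + k • e) with hφdef
  have hφ : HasDerivAt φ (fderiv ℝ f a e - fderiv ℝ f b e) 0 := by
    have h1 := line_hasDerivAt f hf a e 0
    have h2 := line_hasDerivAt f hf b e 0
    have h3 := h1.sub h2
    simp only [zero_smul, add_zero] at h3
    exact h3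
  have hsl : Tendsto (slope φ 0) (𝓝[>] 0) (𝓝 (fderiv ℝ f a e - fderiv ℝ f b e)) :=
    (hasDerivAt_iff_tendsto_slope.1 hφ).mono_left
      (nhdsWithin_mono _ (by intro k hk; exact ne_of_gt hk))
  have hnn : ∀ᶠ k in 𝓝[>] (0:ℝ), 0 ≤ slope φ 0 k := by
    filter_upwards [self_mem_nhdsWithin] with k hk
    have hk0 : (0:ℝ) < k := hk
    have hmem1 : a + k • e ∈ {z : Fin n → ℝ | 0 ≤ z} := by
      intro j; have := ha j; have := he0 j; simp only [Pi.zero_apply, Pi.add_apply, Pi.smul_apply, smul_eq_mul]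
      have h1 : (0:ℝ) ≤ a j := ha j
      have h2 : (0:ℝ) ≤ e j := he0 j
      nlinarith
    have hmem2 : b + k • e ∈ {z : Fin n → ℝ | 0 ≤ z} := by
      intro j; simp only [Pi.zero_apply, Pi.add_apply, Pi.smul_apply, smul_eq_mul]
      have h1 : (0:ℝ) ≤ b j := hb j
      have h2 : (0:ℝ) ≤ e j := he0 j
      nlinarith
    have := hDR a ha b hb hab i k hk0.le hmem1 hmem2
    rw [slope_def_field]
    have hφ0 : φ 0 = f a - f b := by simp [hφdef]
    have : φ 0 ≤ φ k := by simp only [hφdef, hφ0] at *; linarith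
    have : 0 ≤ φ k - φ 0 := by linarith
    exact div_nonneg this (by linarith)
  have := ge_of_tendsto hsl hnn
  linarith [this]

lemma fderiv_repr {n : ℕ} (f : (Fin n → ℝ) → ℝ) (y u : Fin n → ℝ) :
    fderiv ℝ f y u = ∑ i, u i * fderiv ℝ f y (Pi.single i 1) := by
  have hu : u = ∑ i, u i • (Pi.single i 1 : Fin n → ℝ) := by
    ext j
    simp [Finset.sum_apply, Pi.single_apply]
  nth_rewrite 1 [hu]
  rw [map_sum]
  simp [smul_eq_mul]

lemma dir_mono {n : ℕ} (f : (Fin n → ℝ) → ℝ) (hf : Differentiable ℝ f)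
    (hDR : DROn f {z : Fin n → ℝ | 0 ≤ z})
    (a b u : Fin n → ℝ) (ha : 0 ≤ a) (hab : a ≤ b) (hu : 0 ≤ u) :
    fderiv ℝ f b u ≤ fderiv ℝ f a u := by
  rw [fderiv_repr f a u, fderiv_repr f b u]
  apply Finset.sum_le_sum
  intro i _
  exact mul_le_mul_of_nonneg_left (partial_mono f hf hDR a b ha hab i) (hu i)

lemma concave_step {n : ℕ} (f : (Fin n → ℝ) → ℝ) (hf : Differentiable ℝ f)
    (hDR : DROn f {z : Fin n → ℝ | 0 ≤ z})
    (x vs : Fin n → ℝ) (hx : 0 ≤ x) (hvs : 0 ≤ vs) :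
    f (x + vs) - f x ≤ fderiv ℝ f x vs := by
  set C := fderiv ℝ f x vs with hC
  set h : ℝ → ℝ := fun t => t * C - f (x + t • vs) with hh
  have hder : ∀ t : ℝ, HasDerivAt h (C - fderiv ℝ f (x + t • vs) vs) t :=
    fun t => (hasDerivAt_mul_const C).sub (line_hasDerivAt f hf x vs t)
  have hmonoh : MonotoneOn h (Icc (0:ℝ) 1) := by
    apply monotoneOn_of_deriv_nonneg (convex_Icc 0 1)
    · exact fun t _ => (hder t).continuousAt.continuousWithinAt
    · intro t _
      exact (hder t).differentiableAt.differentiableWithinAt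
    · intro t ht
      rw [interior_Icc] at ht
      rw [(hder t).deriv]
      have hle : x ≤ x + t • vs := by
        intro j
        have h1 : (0:ℝ) ≤ vs j := hvs j
        simp only [Pi.add_apply, Pi.smul_apply, smul_eq_mul]
        nlinarith [ht.1]
      have := dir_mono f hf hDR x (x + t • vs) vs hx hle hvs
      linarith
  have h01 := hmonoh (by simp : (0:ℝ) ∈ Icc (0:ℝ) 1) (by simp : (1:ℝ) ∈ Icc (0:ℝ) 1) zero_le_one
  simp only [hh, zero_mul, one_mul, zero_smul, add_zero, one_smul] at h01
  linarith

/-- Key lemma for the Frank-Wolfe variant: if `v ∈ P` approximately maximizes the linear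
surrogate `w ↦ ⟨w, ∇f(x)⟩` over the down-closed convex set `P`, then
`⟨v, ∇f(x)⟩ ≥ α (f(x*) − f(x)) − δL/2`. -/
theorem frankWolfe_linearization_lemma {n : ℕ}
    (f : (Fin n → ℝ) → ℝ) (hf : Differentiable ℝ f)
    (hmono : ∀ a b : Fin n → ℝ, 0 ≤ a → a ≤ b → f a ≤ f b)
    (hDR : DROn f {z : Fin n → ℝ | 0 ≤ z})
    (P : Set (Fin n → ℝ)) (hPconv : Convex ℝ P)
    (hPpos : P ⊆ {z : Fin n → ℝ | 0 ≤ z}) (hP0 : (0 : Fin n → ℝ) ∈ P)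
    (hPdc : ∀ y ∈ P, ∀ z : Fin n → ℝ, 0 ≤ z → z ≤ y → z ∈ P)
    (α δ L : ℝ) (hα : 0 < α) (hα1 : α ≤ 1) (hδ : 0 ≤ δ) (hL : 0 < L)
    (x xstar : Fin n → ℝ) (hx : x ∈ P) (hxstar : xstar ∈ P)
    (v : Fin n → ℝ) (hvP : v ∈ P)
    (hv : ∀ w ∈ P, fderiv ℝ f x v ≥ α * fderiv ℝ f x w - δ * L / 2) :
    fderiv ℝ f x v ≥ α * (f xstar - f x) - δ * L / 2 := by
  have hx0 : (0:Fin n → ℝ) ≤ x := hPpos hx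
  have hxs0 : (0:Fin n → ℝ) ≤ xstar := hPpos hxstar
  set vs : Fin n → ℝ := fun i => max (x i) (xstar i) - x i with hvs
  have hvs0 : (0:Fin n → ℝ) ≤ vs := by
    intro j
    simp only [hvs, Pi.zero_apply]
    have := le_max_left (x j) (xstar j)
    linarith
  have hvsle : vs ≤ xstar := by
    intro j
    simp only [hvs]
    have ha : (0:ℝ) ≤ x j := hx0 j
    have hb : (0:ℝ) ≤ xstar j := hxs0 j
    have h1 : max (x j) (xstar j) ≤ x j + xstar j := max_le (by linarith) (by linarith)
    linarith
  have hvsP : vs ∈ P := hPdc xstar hxstar vs hvs0 hvsle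
  have hmem : f xstar ≤ f (x + vs) := by
    apply hmono xstar (x + vs) hxs0
    intro j
    simp only [Pi.add_apply, hvs]
    have := le_max_right (x j) (xstar j)
    linarith
  have hcs := concave_step f hf hDR x vs hx0 hvs0
  have hkey := hv vs hvsP
  have h1 : f xstar - f x ≤ fderiv ℝ f x vs := by linarith
  have h2 := mul_le_mul_of_nonneg_left h1 hα.le
  linarith
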